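/- For all integers a, b, c, d, e: (F(d−c)·L(e−b) − F(e−c)·L(d−b))·F(c−a) = (F(e−a)·F(d−c) − F(d−a)·F(e−c))·L(c−b). -/

import Mathlib

/-- A sequence satisfying the Fibonacci recurrence that vanishes at two
consecutive points vanishes everywhere. -/
theorem fib_ext_zero (K : ℤ → ℤ) (hrec : ∀ n : ℤ, K n = K (n - 1) + K (n - 2))
    (m : ℤ) (h0 : K m = 0) (h1 : K (m + 1) = 0) : ∀ n : ℤ, K n = 0 := by
  have key : ∀ n : ℤ, K (m + n) = 0 ∧ K (m + n + 1) = 0 := by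
    intro n
    induction n using Int.induction_on with
    | zero => constructor <;> simpa
    | succ k ih =>
      have h2 := hrec (m + k + 2)
      rw [show m + k + 2 - 1 = m + k + 1 by ring, show m + k + 2 - 2 = m + k by ring] at h2
      constructor
      · rw [show m + (k + 1 : ℤ) = m + k + 1 by ring]; exact ih.2
      · rw [show m + (k + 1 : ℤ) + 1 = m + k + 2 by ring]
        rw [h2, ih.1, ih.2]; ring
    | pred k ih =>
      have h2 := hrec (m - k + 1)
      rw [show m - k + 1 - 1 = m - k by ring, show m - k + 1 - 2 = m - k - 1 by ring] at h2
      have hk1 : K (m - k + 1) = 0 := by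
        rw [show m - k + 1 = m + -(k : ℤ) + 1 by ring]; exact ih.2
      have hk0 : K (m - k) = 0 := by
        rw [show m - k = m + -(k : ℤ) by ring]; exact ih.1
      constructor
      · rw [show m + (-(k:ℤ) - 1) = m - k - 1 by ring]; omega
      · rw [show m + (-(k:ℤ) - 1) + 1 = m - k by ring]; exact hk0
  intro n
  have := (key (n - m)).1
  rwa [show m + (n - m) = n by ring] at this

/-- Corollary identity for Fibonacci and Lucas numbers. -/
theorem stmt_7 (F L : ℤ → ℤ)
    (hF0 : F 0 = 0) (hF1 : F 1 = 1)
    (hF : ∀ n : ℤ, F n = F (n - 1) + F (n - 2))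
    (hL0 : L 0 = 2) (hL1 : L 1 = 1)
    (hL : ∀ n : ℤ, L n = L (n - 1) + L (n - 2))
    (a b c d e : ℤ) :
    (F (d - c) * L (e - b) - F (e - c) * L (d - b)) * F (c - a)
      = (F (e - a) * F (d - c) - F (d - a) * F (e - c)) * L (c - b) := by
  -- Case d = c + 1, proved by induction on e.
  have base1 : ∀ e : ℤ,
      (F (c + 1 - c) * L (e - b) - F (e - c) * L (c + 1 - b)) * F (c - a)
        = (F (e - a) * F (c + 1 - c) - F (c + 1 - a) * F (e - c)) * L (c - b) := by
    have := fib_ext_zero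
      (fun e => (F (c + 1 - c) * L (e - b) - F (e - c) * L (c + 1 - b)) * F (c - a)
        - (F (e - a) * F (c + 1 - c) - F (c + 1 - a) * F (e - c)) * L (c - b))
      (by
        intro n
        have h1 := hF (n - c); have h2 := hL (n - b); have h3 := hF (n - a)
        rw [show n - c - 1 = n - 1 - c by ring, show n - c - 2 = n - 2 - c by ring] at h1
        rw [show n - b - 1 = n - 1 - b by ring, show n - b - 2 = n - 2 - b by ring] at h2
        rw [show n - a - 1 = n - 1 - a by ring, show n - a - 2 = n - 2 - a by ring] at h3
        rw [h1, h2, h3]; ring)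
      c
      (by
        rw [show c - c = (0:ℤ) by ring, show c + 1 - c = (1:ℤ) by ring, hF0, hF1]; ring)
      (by
        rw [show c + 1 - c = (1:ℤ) by ring, hF1]; ring)
    intro e
    have h := this e
    linarith
  -- Case d = c, trivial.
  have base0 : ∀ e : ℤ,
      (F (c - c) * L (e - b) - F (e - c) * L (c - b)) * F (c - a)
        = (F (e - a) * F (c - c) - F (c - a) * F (e - c)) * L (c - b) := by
    intro e
    rw [show c - c = (0:ℤ) by ring, hF0]; ring
  -- Now induct on d.
  have main := fib_ext_zero
    (fun d => (F (d - c) * L (e - b) - F (e - c) * L (d - b)) * F (c - a)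
      - (F (e - a) * F (d - c) - F (d - a) * F (e - c)) * L (c - b))
    (by
      intro n
      have h1 := hF (n - c); have h2 := hL (n - b); have h3 := hF (n - a)
      rw [show n - c - 1 = n - 1 - c by ring, show n - c - 2 = n - 2 - c by ring] at h1
      rw [show n - b - 1 = n - 1 - b by ring, show n - b - 2 = n - 2 - b by ring] at h2
      rw [show n - a - 1 = n - 1 - a by ring, show n - a - 2 = n - 2 - a by ring] at h3
      rw [h1, h2, h3]; ring)
    c
    (by linarith [base0 e])
    (by linarith [base1 e])
  have h := main d
  linarith
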